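/- Let 𝔄 be an algebra (Boolean algebra of sets) of subsets of a set S, and let 𝔄₁, 𝔄₂ be subalgebras of 𝔄. Let ν₁ : 𝔄₁ → [0,1] and ν₂ : 𝔄₂ → [0,1] be finitely additive measures with ν₁(S) = ν₂(S) = 1. Suppose that ν₁(A₁) + ν₂(A₂) ≤ 1 whenever A₁ ∈ 𝔄₁, A₂ ∈ 𝔄₂ and A₁ ∩ A₂ = ∅. Then there exists a finitely additive measure ν : 𝔄 → [0,1] extending both ν₁ and ν₂. -/

import Mathlib

/-- An algebra (Boolean algebra) of subsets of `S`. -/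
def IsSetAlg {S : Type*} (𝔄 : Set (Set S)) : Prop :=
  ∅ ∈ 𝔄 ∧ (∀ A ∈ 𝔄, Aᶜ ∈ 𝔄) ∧ (∀ A ∈ 𝔄, ∀ B ∈ 𝔄, A ∪ B ∈ 𝔄)

/-- A finitely additive measure on an algebra `𝔄`, with values in `[0,1]`. -/
def IsFinAdd {S : Type*} (𝔄 : Set (Set S)) (ν : Set S → ℝ) : Prop :=
  ν ∅ = 0 ∧ (∀ A ∈ 𝔄, 0 ≤ ν A ∧ ν A ≤ 1) ∧
    ∀ A ∈ 𝔄, ∀ B ∈ 𝔄, Disjoint A B → ν (A ∪ B) = ν A + ν B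

open Set Finset

section Alg
variable {S : Type*} {𝔅 : Set (Set S)} (h : IsSetAlg 𝔅)
include h

lemma alg_univ : Set.univ ∈ 𝔅 := by
  simpa using h.2.1 _ h.1

lemma alg_inter {A B : Set S} (hA : A ∈ 𝔅) (hB : B ∈ 𝔅) : A ∩ B ∈ 𝔅 := by
  have := h.2.1 _ (h.2.2 _ (h.2.1 _ hA) _ (h.2.1 _ hB))
  simpa [Set.compl_union] using this

lemma alg_biUnion {ι : Type*} (s : Finset ι) (f : ι → Set S) (hf : ∀ i ∈ s, f i ∈ 𝔅) :
    (⋃ i ∈ s, f i) ∈ 𝔅 := by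
  classical
  induction s using Finset.induction_on with
  | empty => simpa using h.1
  | insert a s hnot ih =>
    rw [Finset.set_biUnion_insert]
    exact h.2.2 _ (hf a (Finset.mem_insert_self a s)) _
      (ih fun i hi => hf i (Finset.mem_insert_of_mem hi))

lemma alg_biInter {ι : Type*} (s : Finset ι) (f : ι → Set S) (hf : ∀ i ∈ s, f i ∈ 𝔅) :
    (⋂ i ∈ s, f i) ∈ 𝔅 := by
  classical
  induction s using Finset.induction_on with
  | empty => simpa using alg_univ h
  | insert a s hnot ih =>
    rw [Finset.set_biInter_insert]
    exact alg_inter h (hf a (Finset.mem_insert_self a s))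
      (ih fun i hi => hf i (Finset.mem_insert_of_mem hi))

variable {ν : Set S → ℝ} (hν : IsFinAdd 𝔅 ν)
include hν

lemma fa_biUnion {ι : Type*} (s : Finset ι) (f : ι → Set S) (hf : ∀ i ∈ s, f i ∈ 𝔅)
    (hd : ∀ i ∈ s, ∀ j ∈ s, i ≠ j → Disjoint (f i) (f j)) :
    ν (⋃ i ∈ s, f i) = ∑ i ∈ s, ν (f i) := by
  classical
  induction s using Finset.induction_on with
  | empty => simpa using hν.1
  | insert a s hnot ih =>
    rw [Finset.set_biUnion_insert, Finset.sum_insert hnot]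
    rw [hν.2.2 _ (hf a (Finset.mem_insert_self a s)) _
      (alg_biUnion h s f fun i hi => hf i (Finset.mem_insert_of_mem hi))
      (by
        rw [Set.disjoint_iUnion₂_right]
        intro i hi
        exact hd a (Finset.mem_insert_self a s) i (Finset.mem_insert_of_mem hi)
          (fun e => hnot (e ▸ hi)))]
    rw [ih (fun i hi => hf i (Finset.mem_insert_of_mem hi))
      (fun i hi j hj hij => hd i (Finset.mem_insert_of_mem hi) j (Finset.mem_insert_of_mem hj) hij)]

lemma fa_compl (htot : ν Set.univ = 1) {A : Set S} (hA : A ∈ 𝔅) : ν Aᶜ = 1 - ν A := by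
  have := hν.2.2 A hA Aᶜ (h.2.1 _ hA) disjoint_compl_right
  rw [Set.union_compl_self, htot] at this
  linarith
end Alg

section Atoms
open Classical in
noncomputable def sigOf {S : Type*} {ι : Type*} (A : ι → Set S) (s : S) : ι → Bool :=
  fun i => decide (s ∈ A i)

variable {S : Type*} {ι : Type*} [Fintype ι] [DecidableEq ι]

def atomOf (A : ι → Set S) (σ : ι → Bool) : Set S := {s | ∀ i, s ∈ A i ↔ σ i = true}

lemma mem_atomOf {A : ι → Set S} {σ : ι → Bool} {s : S} :
    s ∈ atomOf A σ ↔ ∀ i, (s ∈ A i ↔ σ i = true) := Iff.rfl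

lemma mem_atom_sigOf (A : ι → Set S) (s : S) : s ∈ atomOf A (sigOf A s) := by
  intro i
  simp [sigOf]

lemma atomOf_disjoint {A : ι → Set S} {σ τ : ι → Bool} (h : σ ≠ τ) :
    Disjoint (atomOf A σ) (atomOf A τ) := by
  rw [Set.disjoint_left]
  intro s hs ht
  apply h
  funext i
  have h1 := (mem_atomOf.1 hs i)
  have h2 := (mem_atomOf.1 ht i)
  exact Bool.coe_iff_coe.mp (h1.symm.trans h2)

lemma atomOf_mem {𝔅 : Set (Set S)} (h : IsSetAlg 𝔅) {A : ι → Set S}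
    (hA : ∀ i, A i ∈ 𝔅) (σ : ι → Bool) : atomOf A σ ∈ 𝔅 := by
  have : atomOf A σ = ⋂ i ∈ (Finset.univ : Finset ι), (if σ i = true then A i else (A i)ᶜ) := by
    ext s
    simp only [mem_atomOf, Set.mem_iInter]
    constructor
    · intro hs i _
      rcases hσ : σ i with _ | _ <;> simp_all [hs i]
    · intro hs i
      have := hs i (Finset.mem_univ i)
      rcases hσ : σ i with _ | _ <;> simp_all
  rw [this]
  exact alg_biInter h _ _ (fun i _ => by split <;> [exact hA i; exact h.2.1 _ (hA i)])

lemma iUnion_atomOf (A : ι → Set S) : (⋃ σ ∈ (Finset.univ : Finset (ι → Bool)), atomOf A σ) = Set.univ := by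
  ext s
  simp only [Set.mem_iUnion, Set.mem_univ, iff_true]
  exact ⟨sigOf A s, Finset.mem_univ _, mem_atom_sigOf A s⟩

lemma setEq_biUnion_atomOf (A : ι → Set S) (i : ι) :
    A i = ⋃ σ ∈ Finset.univ.filter (fun σ : ι → Bool => σ i = true), atomOf A σ := by
  ext s
  simp only [Set.mem_iUnion, Finset.mem_filter, Finset.mem_univ, true_and]
  constructor
  · intro hs
    exact ⟨sigOf A s, by simpa [sigOf] using hs, mem_atom_sigOf A s⟩
  · rintro ⟨σ, hσ, hs⟩
    exact (mem_atomOf.1 hs i).2 hσ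

variable {𝔅 : Set (Set S)} (h : IsSetAlg 𝔅) {ν : Set S → ℝ} (hν : IsFinAdd 𝔅 ν)
include h hν

lemma nu_biUnion_atoms (A : ι → Set S) (hA : ∀ i, A i ∈ 𝔅) (t : Finset (ι → Bool)) :
    ν (⋃ σ ∈ t, atomOf A σ) = ∑ σ ∈ t, ν (atomOf A σ) :=
  fa_biUnion h hν t _ (fun σ _ => atomOf_mem h hA σ)
    (fun _ _ _ _ hij => atomOf_disjoint hij)

lemma nu_apply_eq_sum_atoms (A : ι → Set S) (hA : ∀ i, A i ∈ 𝔅) (i : ι) :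
    ν (A i) = ∑ σ : ι → Bool, if σ i = true then ν (atomOf A σ) else 0 := by
  rw [show (∑ σ : ι → Bool, if σ i = true then ν (atomOf A σ) else 0)
      = ∑ σ ∈ Finset.univ.filter (fun σ : ι → Bool => σ i = true), ν (atomOf A σ) from
    (Finset.sum_filter _ _).symm]
  rw [← nu_biUnion_atoms h hν A hA, ← setEq_biUnion_atomOf]

lemma sum_nu_atoms (htot : ν Set.univ = 1) (A : ι → Set S) (hA : ∀ i, A i ∈ 𝔅) :
    ∑ σ : ι → Bool, ν (atomOf A σ) = 1 := by
  rw [← htot, ← iUnion_atomOf A, nu_biUnion_atoms h hν A hA]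

lemma weighted_sum_atoms (A : ι → Set S) (hA : ∀ i, A i ∈ 𝔅) (c : ι → ℝ) :
    ∑ i, c i * ν (A i)
      = ∑ σ : ι → Bool, (∑ i, if σ i = true then c i else 0) * ν (atomOf A σ) := by
  calc ∑ i, c i * ν (A i)
      = ∑ i, ∑ σ : ι → Bool, if σ i = true then c i * ν (atomOf A σ) else 0 := by
        refine Finset.sum_congr rfl fun i _ => ?_
        rw [nu_apply_eq_sum_atoms h hν A hA i, Finset.mul_sum]
        exact Finset.sum_congr rfl fun σ _ => by split <;> simp
    _ = ∑ σ : ι → Bool, ∑ i, if σ i = true then c i * ν (atomOf A σ) else 0 :=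
        Finset.sum_comm
    _ = ∑ σ : ι → Bool, (∑ i, if σ i = true then c i else 0) * ν (atomOf A σ) := by
        refine Finset.sum_congr rfl fun σ _ => ?_
        rw [Finset.sum_mul]
        exact Finset.sum_congr rfl fun i _ => by split <;> simp

end Atoms

open MeasureTheory

lemma step_fun_eq (p v : ℝ) :
    (fun t : ℝ => if t ≤ v then p else 0) = Set.indicator {x | x ≤ v} (fun _ => p) := by
  funext t; simp [Set.indicator]

lemma step_ii (p v a b : ℝ) :
    IntervalIntegrable (fun t : ℝ => if t ≤ v then p else 0) volume a b := by
  rw [step_fun_eq]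
  have : ({x | x ≤ v} : Set ℝ) = Set.Iic v := rfl
  rw [this]
  exact ⟨(intervalIntegrable_const (c := p)).1.indicator measurableSet_Iic,
    (intervalIntegrable_const (c := p)).2.indicator measurableSet_Iic⟩

lemma step_integral (p v C : ℝ) (hv : |v| ≤ C) :
    ∫ t in (-C)..C, (if t ≤ v then p else 0) = p * (v + C) := by
  obtain ⟨h1, h2⟩ := abs_le.1 hv
  rw [step_fun_eq]
  rw [intervalIntegral.integral_indicator (Set.mem_Icc.2 ⟨h1, h2⟩)]
  simp [smul_eq_mul]
  ring

lemma core_nonneg {S : Type*} {𝔄₁ 𝔄₂ : Set (Set S)}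
    (h𝔄₁ : IsSetAlg 𝔄₁) (h𝔄₂ : IsSetAlg 𝔄₂)
    {ν₁ ν₂ : Set S → ℝ} (hν₁ : IsFinAdd 𝔄₁ ν₁) (hν₂ : IsFinAdd 𝔄₂ ν₂)
    (htot₁ : ν₁ Set.univ = 1) (htot₂ : ν₂ Set.univ = 1)
    (hcomp : ∀ A₁ ∈ 𝔄₁, ∀ A₂ ∈ 𝔄₂, A₁ ∩ A₂ = ∅ → ν₁ A₁ + ν₂ A₂ ≤ 1)
    {ι κ : Type*} [Fintype ι] [DecidableEq ι] [Fintype κ] [DecidableEq κ]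
    (c : ι → ℝ) (A : ι → Set S) (hA : ∀ i, A i ∈ 𝔄₁)
    (d : κ → ℝ) (B : κ → Set S) (hB : ∀ j, B j ∈ 𝔄₂)
    (hpos : ∀ s, 0 ≤ (∑ i, c i * (A i).indicator 1 s) + ∑ j, d j * (B j).indicator 1 s) :
    0 ≤ (∑ i, c i * ν₁ (A i)) + ∑ j, d j * ν₂ (B j) := by
  classical
  set v : (ι → Bool) → ℝ := fun σ => ∑ i, if σ i = true then c i else 0 with hv
  set w : (κ → Bool) → ℝ := fun τ => ∑ j, if τ j = true then d j else 0 with hw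
  set p : (ι → Bool) → ℝ := fun σ => ν₁ (atomOf A σ) with hp
  set q : (κ → Bool) → ℝ := fun τ => ν₂ (atomOf B τ) with hq
  set C : ℝ := (∑ i, |c i|) + ∑ j, |d j| with hC
  have hC0 : 0 ≤ C := by positivity
  have hvC : ∀ σ, |v σ| ≤ C := by
    intro σ
    refine (Finset.abs_sum_le_sum_abs _ _).trans ?_
    rw [hC]
    have : ∀ i ∈ Finset.univ, |if σ i = true then c i else 0| ≤ |c i| := by
      intro i _; split <;> simp [abs_nonneg]
    have h2 : (0:ℝ) ≤ ∑ j, |d j| := by positivity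
    calc (∑ i, |if σ i = true then c i else 0|) ≤ ∑ i, |c i| := Finset.sum_le_sum this
      _ ≤ _ := by linarith
  have hwC : ∀ τ, |w τ| ≤ C := by
    intro τ
    refine (Finset.abs_sum_le_sum_abs _ _).trans ?_
    rw [hC]
    have : ∀ j ∈ Finset.univ, |if τ j = true then d j else 0| ≤ |d j| := by
      intro j _; split <;> simp [abs_nonneg]
    have h2 : (0:ℝ) ≤ ∑ i, |c i| := by positivity
    calc (∑ j, |if τ j = true then d j else 0|) ≤ ∑ j, |d j| := Finset.sum_le_sum this
      _ ≤ _ := by linarith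
  -- value of the simple function on an atom
  have hval₁ : ∀ (σ) (s : S), s ∈ atomOf A σ → (∑ i, c i * (A i).indicator 1 s) = v σ := by
    intro σ s hs
    refine Finset.sum_congr rfl fun i _ => ?_
    have := (mem_atomOf.1 hs) i
    by_cases hsi : s ∈ A i
    · simp [Set.indicator_of_mem hsi, this.1 hsi]
    · have : ¬ (σ i = true) := fun hh => hsi (this.2 hh)
      simp [Set.indicator_of_notMem hsi, this]
  have hval₂ : ∀ (τ) (s : S), s ∈ atomOf B τ → (∑ j, d j * (B j).indicator 1 s) = w τ := by
    intro τ s hs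
    refine Finset.sum_congr rfl fun j _ => ?_
    have := (mem_atomOf.1 hs) j
    by_cases hsj : s ∈ B j
    · simp [Set.indicator_of_mem hsj, this.1 hsj]
    · have : ¬ (τ j = true) := fun hh => hsj (this.2 hh)
      simp [Set.indicator_of_notMem hsj, this]
  have hpair : ∀ σ τ, (atomOf A σ ∩ atomOf B τ).Nonempty → 0 ≤ v σ + w τ := by
    rintro σ τ ⟨s, hs1, hs2⟩
    rw [← hval₁ σ s hs1, ← hval₂ τ s hs2]
    exact hpos s
  -- the layer functions
  set F : ℝ → ℝ := fun t => ∑ σ, if t ≤ v σ then p σ else 0 with hF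
  set G : ℝ → ℝ := fun t => ∑ τ, if -t < w τ then q τ else 0 with hG
  have keyA : ∀ t, 1 ≤ F t + G t := by
    intro t
    set Ut : Set S := ⋃ σ ∈ Finset.univ.filter (fun σ => t ≤ v σ), atomOf A σ with hUt
    set Vt : Set S := ⋃ τ ∈ Finset.univ.filter (fun τ => -t < w τ), atomOf B τ with hVt
    have hUmem : Ut ∈ 𝔄₁ := alg_biUnion h𝔄₁ _ _ fun σ _ => atomOf_mem h𝔄₁ hA σ
    have hVmem : Vt ∈ 𝔄₂ := alg_biUnion h𝔄₂ _ _ fun τ _ => atomOf_mem h𝔄₂ hB τ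
    have hUv : ν₁ Ut = F t := by
      rw [hUt, nu_biUnion_atoms h𝔄₁ hν₁ A hA, hF]
      rw [Finset.sum_filter]
    have hVv : ν₂ Vt = G t := by
      rw [hVt, nu_biUnion_atoms h𝔄₂ hν₂ B hB, hG]
      rw [Finset.sum_filter]
    have hsub : Vtᶜ ⊆ Ut := by
      intro s hs
      have hsB : s ∈ atomOf B (sigOf B s) := mem_atom_sigOf B s
      have hwτ : ¬ (-t < w (sigOf B s)) := by
        intro hlt
        exact hs (Set.mem_biUnion (Finset.mem_filter.2 ⟨Finset.mem_univ _, hlt⟩) hsB)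
      have hsA : s ∈ atomOf A (sigOf A s) := mem_atom_sigOf A s
      have h0 := hpair _ _ ⟨s, hsA, hsB⟩
      have : t ≤ v (sigOf A s) := by push_neg at hwτ; linarith
      exact Set.mem_biUnion (Finset.mem_filter.2 ⟨Finset.mem_univ _, this⟩) hsA
    have hdisj : Utᶜ ∩ Vtᶜ = ∅ := by
      rw [Set.eq_empty_iff_forall_notMem]
      rintro s ⟨hsU, hsV⟩
      exact hsU (hsub hsV)
    have := hcomp Utᶜ (h𝔄₁.2.1 _ hUmem) Vtᶜ (h𝔄₂.2.1 _ hVmem) hdisj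
    rw [fa_compl h𝔄₁ hν₁ htot₁ hUmem, fa_compl h𝔄₂ hν₂ htot₂ hVmem] at this
    rw [hUv, hVv] at this
    linarith
  -- rewrite G in terms of steps
  have hGalt : ∀ t, G t = ∑ τ, (q τ - if t ≤ -(w τ) then q τ else 0) := by
    intro t
    refine Finset.sum_congr rfl fun τ _ => ?_
    by_cases hlt : -t < w τ
    · have : ¬ (t ≤ -(w τ)) := by linarith
      simp [hlt, this]
    · have : t ≤ -(w τ) := by push_neg at hlt; linarith
      simp [hlt, this]
  -- integrability
  have hFint : IntervalIntegrable F volume (-C) C := by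
    have : F = ∑ σ ∈ Finset.univ, (fun t => if t ≤ v σ then p σ else 0) := by
      funext t; simp [hF, Finset.sum_apply]
    rw [this]
    exact IntervalIntegrable.sum _ fun σ _ => step_ii _ _ _ _
  have hGint : IntervalIntegrable G volume (-C) C := by
    have : G = ∑ τ ∈ Finset.univ, (fun t => q τ - if t ≤ -(w τ) then q τ else 0) := by
      funext t; simp only [Finset.sum_apply]; exact hGalt t
    rw [this]
    exact IntervalIntegrable.sum _ fun τ _ =>
      (intervalIntegrable_const (c := q τ)).sub (step_ii _ _ _ _)
  -- compute integrals
  have hFI : ∫ t in (-C)..C, F t = ∑ σ, p σ * (v σ + C) := by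
    calc ∫ t in (-C)..C, F t
        = ∑ σ, ∫ t in (-C)..C, (if t ≤ v σ then p σ else 0) :=
          intervalIntegral.integral_finset_sum fun σ _ => step_ii (p σ) (v σ) (-C) C
      _ = ∑ σ, p σ * (v σ + C) := Finset.sum_congr rfl fun σ _ => step_integral _ _ _ (hvC σ)
  have hGI : ∫ t in (-C)..C, G t = ∑ τ, q τ * (w τ + C) := by
    have : ∀ t, G t = ∑ τ, (q τ - if t ≤ -(w τ) then q τ else 0) := hGalt
    rw [intervalIntegral.integral_congr (g := fun t => ∑ τ, (q τ - if t ≤ -(w τ) then q τ else 0))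
      (fun t _ => this t)]
    rw [intervalIntegral.integral_finset_sum fun τ _ =>
      (intervalIntegrable_const (c := q τ)).sub (step_ii (q τ) (-(w τ)) (-C) C)]
    refine Finset.sum_congr rfl fun τ _ => ?_
    rw [intervalIntegral.integral_sub (intervalIntegrable_const (c := q τ)) (step_ii _ _ _ _)]
    rw [step_integral _ _ _ (by rw [abs_neg]; exact hwC τ)]
    simp [smul_eq_mul]
    ring
  -- monotone comparison
  have hmono : (2:ℝ) * C ≤ (∫ t in (-C)..C, F t) + ∫ t in (-C)..C, G t := by
    have h1 : ∫ t in (-C)..C, (1:ℝ) = 2 * C := by simp; ring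
    have h2 : (∫ t in (-C)..C, (1:ℝ)) ≤ ∫ t in (-C)..C, (F t + G t) := by
      refine intervalIntegral.integral_mono_on (by linarith) intervalIntegrable_const
        (hFint.add hGint) ?_
      intro t _; exact keyA t
    rw [intervalIntegral.integral_add hFint hGint] at h2
    linarith
  rw [hFI, hGI] at hmono
  have hsum₁ : ∑ σ, p σ = 1 := sum_nu_atoms h𝔄₁ hν₁ htot₁ A hA
  have hsum₂ : ∑ τ, q τ = 1 := sum_nu_atoms h𝔄₂ hν₂ htot₂ B hB
  have hexp₁ : ∑ σ, p σ * (v σ + C) = (∑ σ, v σ * p σ) + C := by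
    rw [Finset.sum_congr rfl (fun σ _ => show p σ * (v σ + C) = v σ * p σ + C * p σ by ring),
      Finset.sum_add_distrib, ← Finset.mul_sum, hsum₁, mul_one]
  have hexp₂ : ∑ τ, q τ * (w τ + C) = (∑ τ, w τ * q τ) + C := by
    rw [Finset.sum_congr rfl (fun τ _ => show q τ * (w τ + C) = w τ * q τ + C * q τ by ring),
      Finset.sum_add_distrib, ← Finset.mul_sum, hsum₂, mul_one]
  rw [weighted_sum_atoms h𝔄₁ hν₁ A hA c, weighted_sum_atoms h𝔄₂ hν₂ B hB d]
  rw [hexp₁, hexp₂] at hmono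
  have : ∑ σ, (∑ i, if σ i = true then c i else 0) * ν₁ (atomOf A σ) = ∑ σ, v σ * p σ := rfl
  rw [this]
  have : ∑ τ, (∑ j, if τ j = true then d j else 0) * ν₂ (atomOf B τ) = ∑ τ, w τ * q τ := rfl
  rw [this]
  linarith

section HB
variable {S : Type*}

/-- Values of dominating simple combinations. -/
def RepSet (𝔄₁ 𝔄₂ : Set (Set S)) (ν₁ ν₂ : Set S → ℝ) (f : S → ℝ) : Set ℝ :=
  { r | ∃ (n m : ℕ) (c : Fin n → ℝ) (A : Fin n → Set S) (d : Fin m → ℝ) (B : Fin m → Set S),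
      (∀ i, A i ∈ 𝔄₁) ∧ (∀ j, B j ∈ 𝔄₂) ∧
      (∀ s, f s ≤ (∑ i, c i * (A i).indicator 1 s) + ∑ j, d j * (B j).indicator 1 s) ∧
      r = (∑ i, c i * ν₁ (A i)) + ∑ j, d j * ν₂ (B j) }

variable {𝔄₁ 𝔄₂ : Set (Set S)} {ν₁ ν₂ : Set S → ℝ}

lemma rep_one₁ (h𝔄₁ : IsSetAlg 𝔄₁) {X : Set S} (hX : X ∈ 𝔄₁) (t : ℝ) (f : S → ℝ)
    (hdom : ∀ s, f s ≤ t * X.indicator 1 s) :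
    t * ν₁ X ∈ RepSet 𝔄₁ 𝔄₂ ν₁ ν₂ f := by
  refine ⟨1, 0, fun _ => t, fun _ => X, Fin.elim0, Fin.elim0, fun _ => hX, fun j => j.elim0,
    fun s => ?_, by simp⟩
  simpa using hdom s

lemma rep_one₂ (h𝔄₂ : IsSetAlg 𝔄₂) {X : Set S} (hX : X ∈ 𝔄₂) (t : ℝ) (f : S → ℝ)
    (hdom : ∀ s, f s ≤ t * X.indicator 1 s) :
    t * ν₂ X ∈ RepSet 𝔄₁ 𝔄₂ ν₁ ν₂ f := by
  refine ⟨0, 1, Fin.elim0, Fin.elim0, fun _ => t, fun _ => X, fun i => i.elim0, fun _ => hX,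
    fun s => ?_, by simp⟩
  simpa using hdom s

lemma rep_lower (h𝔄₁ : IsSetAlg 𝔄₁) (h𝔄₂ : IsSetAlg 𝔄₂)
    (hν₁ : IsFinAdd 𝔄₁ ν₁) (hν₂ : IsFinAdd 𝔄₂ ν₂)
    (htot₁ : ν₁ Set.univ = 1) (htot₂ : ν₂ Set.univ = 1)
    (hcomp : ∀ A₁ ∈ 𝔄₁, ∀ A₂ ∈ 𝔄₂, A₁ ∩ A₂ = ∅ → ν₁ A₁ + ν₂ A₂ ≤ 1)
    {f : S → ℝ} {L : ℝ} (hL : ∀ s, L ≤ f s) :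
    ∀ r ∈ RepSet 𝔄₁ 𝔄₂ ν₁ ν₂ f, L ≤ r := by
  rintro r ⟨n, m, c, A, d, B, hA, hB, hdom, rfl⟩
  have key := core_nonneg h𝔄₁ h𝔄₂ hν₁ hν₂ htot₁ htot₂ hcomp
    (Fin.cons (-L) c) (Fin.cons Set.univ A)
    (fun i => Fin.cases (alg_univ h𝔄₁) hA i) d B hB ?_
  · rw [Fin.sum_univ_succ] at key
    simp only [Fin.cons_zero, Fin.cons_succ, htot₁, mul_one] at key
    linarith
  · intro s
    rw [Fin.sum_univ_succ]
    simp only [Fin.cons_zero, Fin.cons_succ, Set.indicator_univ, Pi.one_apply, mul_one]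
    have := hdom s
    have := hL s
    linarith

lemma rep_add {f g : S → ℝ} {r r' : ℝ} (hr : r ∈ RepSet 𝔄₁ 𝔄₂ ν₁ ν₂ f)
    (hr' : r' ∈ RepSet 𝔄₁ 𝔄₂ ν₁ ν₂ g) : r + r' ∈ RepSet 𝔄₁ 𝔄₂ ν₁ ν₂ (f + g) := by
  obtain ⟨n, m, c, A, d, B, hA, hB, hdom, rfl⟩ := hr
  obtain ⟨n', m', c', A', d', B', hA', hB', hdom', rfl⟩ := hr'
  refine ⟨n + n', m + m', Fin.append c c', Fin.append A A', Fin.append d d', Fin.append B B',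
    ?_, ?_, fun s => ?_, ?_⟩
  · exact fun i => Fin.addCases (fun i0 => by rw [Fin.append_left]; exact hA i0)
      (fun i1 => by rw [Fin.append_right]; exact hA' i1) i
  · exact fun j => Fin.addCases (fun j0 => by rw [Fin.append_left]; exact hB j0)
      (fun j1 => by rw [Fin.append_right]; exact hB' j1) j
  · rw [Fin.sum_univ_add, Fin.sum_univ_add]
    simp only [Fin.append_left, Fin.append_right, Pi.add_apply]
    have := hdom s
    have := hdom' s
    linarith
  · rw [Fin.sum_univ_add, Fin.sum_univ_add]
    simp only [Fin.append_left, Fin.append_right]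
    ring

lemma rep_smul {f : S → ℝ} {r t : ℝ} (ht : 0 < t) (hr : r ∈ RepSet 𝔄₁ 𝔄₂ ν₁ ν₂ f) :
    t * r ∈ RepSet 𝔄₁ 𝔄₂ ν₁ ν₂ (t • f) := by
  obtain ⟨n, m, c, A, d, B, hA, hB, hdom, rfl⟩ := hr
  refine ⟨n, m, fun i => t * c i, A, fun j => t * d j, B, hA, hB, fun s => ?_, ?_⟩
  · have := mul_le_mul_of_nonneg_left (hdom s) ht.le
    simp only [Pi.smul_apply, smul_eq_mul]
    rw [mul_add, Finset.mul_sum, Finset.mul_sum] at this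
    calc t * f s ≤ _ := this
      _ = _ := by
        congr 1 <;> exact Finset.sum_congr rfl fun i _ => by ring
  · rw [mul_add, Finset.mul_sum, Finset.mul_sum]
    congr 1 <;> exact Finset.sum_congr rfl fun i _ => by ring

end HB

def BddFuns (S : Type*) : Submodule ℝ (S → ℝ) where
  carrier := {f | ∃ M : ℝ, ∀ s, |f s| ≤ M}
  add_mem' := by
    rintro f g ⟨M, hM⟩ ⟨M', hM'⟩
    exact ⟨M + M', fun s => (abs_add_le _ _).trans (add_le_add (hM s) (hM' s))⟩
  zero_mem' := ⟨0, fun s => by simp⟩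
  smul_mem' := by
    rintro t f ⟨M, hM⟩
    exact ⟨|t| * M, fun s => by
      rw [Pi.smul_apply, smul_eq_mul, abs_mul]
      exact mul_le_mul_of_nonneg_left (hM s) (abs_nonneg t)⟩


/-- Strassen's common extension theorem for finitely additive measures
(Lemma 3 of the paper, Fremlin 457C). -/
theorem exists_common_finitely_additive_extension
    {S : Type*} (𝔄 𝔄₁ 𝔄₂ : Set (Set S))
    (h𝔄 : IsSetAlg 𝔄) (h𝔄₁ : IsSetAlg 𝔄₁) (h𝔄₂ : IsSetAlg 𝔄₂)
    (hsub₁ : 𝔄₁ ⊆ 𝔄) (hsub₂ : 𝔄₂ ⊆ 𝔄)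
    (ν₁ ν₂ : Set S → ℝ)
    (hν₁ : IsFinAdd 𝔄₁ ν₁) (hν₂ : IsFinAdd 𝔄₂ ν₂)
    (htot₁ : ν₁ Set.univ = 1) (htot₂ : ν₂ Set.univ = 1)
    (hcomp : ∀ A₁ ∈ 𝔄₁, ∀ A₂ ∈ 𝔄₂, A₁ ∩ A₂ = ∅ → ν₁ A₁ + ν₂ A₂ ≤ 1) :
    ∃ ν : Set S → ℝ, IsFinAdd 𝔄 ν ∧ ν Set.univ = 1 ∧
      (∀ A ∈ 𝔄₁, ν A = ν₁ A) ∧ (∀ A ∈ 𝔄₂, ν A = ν₂ A) := by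
  classical
  set E := BddFuns S with hE
  have hRne : ∀ f : E, (RepSet 𝔄₁ 𝔄₂ ν₁ ν₂ ↑f).Nonempty := by
    rintro ⟨f, M, hM⟩
    exact ⟨M * ν₁ Set.univ, rep_one₁ h𝔄₁ (alg_univ h𝔄₁) M f
      (fun s => by simpa using (abs_le.1 (hM s)).2)⟩
  have hRbdd : ∀ f : E, BddBelow (RepSet 𝔄₁ 𝔄₂ ν₁ ν₂ ↑f) := by
    rintro ⟨f, M, hM⟩
    exact ⟨-M, fun r hr => rep_lower h𝔄₁ h𝔄₂ hν₁ hν₂ htot₁ htot₂ hcomp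
      (fun s => (abs_le.1 (hM s)).1) r hr⟩
  set N : E → ℝ := fun f => sInf (RepSet 𝔄₁ 𝔄₂ ν₁ ν₂ ↑f) with hN
  have hNle : ∀ (f : E) (r : ℝ), r ∈ RepSet 𝔄₁ 𝔄₂ ν₁ ν₂ ↑f → N f ≤ r :=
    fun f r hr => csInf_le (hRbdd f) hr
  have hNge : ∀ (f : E) (L : ℝ), (∀ s, L ≤ (f : S → ℝ) s) → L ≤ N f :=
    fun f L hL => le_csInf (hRne f)
      (rep_lower h𝔄₁ h𝔄₂ hν₁ hν₂ htot₁ htot₂ hcomp hL)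
  have N_add : ∀ x y : E, N (x + y) ≤ N x + N y := by
    intro x y
    have h1 : ∀ r ∈ RepSet 𝔄₁ 𝔄₂ ν₁ ν₂ ↑x, ∀ r' ∈ RepSet 𝔄₁ 𝔄₂ ν₁ ν₂ ↑y,
        N (x + y) ≤ r + r' := fun r hr r' hr' => hNle _ _ (rep_add hr hr')
    have h2 : ∀ r ∈ RepSet 𝔄₁ 𝔄₂ ν₁ ν₂ ↑x, N (x + y) - r ≤ N y := fun r hr =>
      le_csInf (hRne y) fun r' hr' => by linarith [h1 r hr r' hr']
    have h3 : N (x + y) - N y ≤ N x :=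
      le_csInf (hRne x) fun r hr => by linarith [h2 r hr]
    linarith
  have N_hom : ∀ t : ℝ, 0 < t → ∀ x : E, N (t • x) = t * N x := by
    intro t ht x
    apply le_antisymm
    · have h1 : ∀ r ∈ RepSet 𝔄₁ 𝔄₂ ν₁ ν₂ ↑x, N (t • x) ≤ t * r := fun r hr =>
        hNle _ _ (rep_smul ht hr)
      have h2 : N (t • x) / t ≤ N x := le_csInf (hRne x) fun r hr => by
        rw [div_le_iff₀ ht]; linarith [h1 r hr]
      calc N (t • x) = N (t • x) / t * t := by field_simp
        _ ≤ N x * t := mul_le_mul_of_nonneg_right h2 ht.le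
        _ = t * N x := mul_comm _ _
    · refine le_csInf (hRne (t • x)) fun r' hr' => ?_
      have hmem : t⁻¹ * r' ∈ RepSet 𝔄₁ 𝔄₂ ν₁ ν₂ ↑x := by
        have h0 := rep_smul (inv_pos.2 ht) hr'
        have h1 : (t⁻¹ • (↑(t • x) : S → ℝ)) = ↑x := by
          rw [Submodule.coe_smul, smul_smul, inv_mul_cancel₀ ht.ne', one_smul]
        rwa [h1] at h0
      have := hNle x _ hmem
      calc t * N x ≤ t * (t⁻¹ * r') := mul_le_mul_of_nonneg_left this ht.le
        _ = r' := by field_simp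
  have hf0 : (0:ℝ) ≤ N 0 := hNge 0 0 (fun s => by simp)
  obtain ⟨g, -, hg⟩ := exists_extension_of_le_sublinear (E := ↥E) ⟨⊥, 0⟩ N N_hom N_add (by
    rintro ⟨x, hx⟩
    rw [Submodule.mem_bot] at hx
    subst hx
    exact hf0)
  have hmemind : ∀ X : Set S, X.indicator (1 : S → ℝ) ∈ BddFuns S := fun X =>
    ⟨1, fun s => by rw [Set.indicator_apply]; split <;> simp⟩
  set indE : Set S → E := fun X => ⟨X.indicator 1, hmemind X⟩ with hindE
  set ν : Set S → ℝ := fun X => g (indE X) with hν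
  have hgle : ∀ (X : Set S) (t : ℝ) (X' : Set S), X' ∈ 𝔄₁ →
      (∀ s, X.indicator 1 s ≤ t * X'.indicator 1 s) → ν X ≤ t * ν₁ X' :=
    fun X t X' hX' hd => (hg (indE X)).trans (hNle _ _ (rep_one₁ h𝔄₁ hX' t _ hd))
  have hgge : ∀ (X : Set S) (t : ℝ) (X' : Set S), X' ∈ 𝔄₁ →
      (∀ s, -(X.indicator 1 s) ≤ t * X'.indicator 1 s) → -(t * ν₁ X') ≤ ν X := by
    intro X t X' hX' hd
    have h1 : g (-(indE X)) ≤ t * ν₁ X' := (hg _).trans (hNle _ _ (rep_one₁ h𝔄₁ hX' t _ (by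
      intro s
      have : ((-(indE X) : E) : S → ℝ) s = -(X.indicator 1 s) := rfl
      rw [this]
      exact hd s)))
    have h2 : g (-(indE X)) = -g (indE X) := map_neg g (indE X)
    rw [hν]
    linarith
  have hgle₂ : ∀ (X : Set S) (t : ℝ) (X' : Set S), X' ∈ 𝔄₂ →
      (∀ s, X.indicator 1 s ≤ t * X'.indicator 1 s) → ν X ≤ t * ν₂ X' :=
    fun X t X' hX' hd => (hg (indE X)).trans (hNle _ _ (rep_one₂ h𝔄₂ hX' t _ hd))
  have hgge₂ : ∀ (X : Set S) (t : ℝ) (X' : Set S), X' ∈ 𝔄₂ →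
      (∀ s, -(X.indicator 1 s) ≤ t * X'.indicator 1 s) → -(t * ν₂ X') ≤ ν X := by
    intro X t X' hX' hd
    have h1 : g (-(indE X)) ≤ t * ν₂ X' := (hg _).trans (hNle _ _ (rep_one₂ h𝔄₂ hX' t _ (by
      intro s
      have : ((-(indE X) : E) : S → ℝ) s = -(X.indicator 1 s) := rfl
      rw [this]
      exact hd s)))
    have h2 : g (-(indE X)) = -g (indE X) := map_neg g (indE X)
    rw [hν]
    linarith
  have hext₁ : ∀ X ∈ 𝔄₁, ν X = ν₁ X := by
    intro X hX
    have h1 : ν X ≤ 1 * ν₁ X := hgle X 1 X hX (fun s => by rw [one_mul])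
    have h2 : -((-1) * ν₁ X) ≤ ν X := hgge X (-1) X hX (fun s => by ring_nf; rfl)
    rw [one_mul] at h1
    have : -((-1) * ν₁ X) = ν₁ X := by ring
    rw [this] at h2
    linarith
  have hext₂ : ∀ X ∈ 𝔄₂, ν X = ν₂ X := by
    intro X hX
    have h1 : ν X ≤ 1 * ν₂ X := hgle₂ X 1 X hX (fun s => by rw [one_mul])
    have h2 : -((-1) * ν₂ X) ≤ ν X := hgge₂ X (-1) X hX (fun s => by ring_nf; rfl)
    rw [one_mul] at h1
    have : -((-1) * ν₂ X) = ν₂ X := by ring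
    rw [this] at h2
    linarith
  have hbounds : ∀ X : Set S, 0 ≤ ν X ∧ ν X ≤ 1 := by
    intro X
    constructor
    · have := hgge X 0 Set.univ (alg_univ h𝔄₁) (fun s => by
        rw [zero_mul]
        simp [Set.indicator_apply]
        split <;> simp)
      simpa using this
    · have := hgle X 1 Set.univ (alg_univ h𝔄₁) (fun s => by
        simp [Set.indicator_apply]
        split <;> simp)
      rw [one_mul, htot₁] at this
      exact this
  have hzero : ν ∅ = 0 := by
    have : indE ∅ = 0 := by
      apply Subtype.ext
      simp [hindE]
      rfl
    rw [hν]
    simp only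
    rw [this, map_zero]
  have hadd : ∀ A ∈ 𝔄, ∀ B ∈ 𝔄, Disjoint A B → ν (A ∪ B) = ν A + ν B := by
    intro A _ B _ hAB
    have : indE (A ∪ B) = indE A + indE B := by
      apply Subtype.ext
      have := Set.indicator_union_of_disjoint hAB (1 : S → ℝ)
      exact this
    rw [hν]
    simp only
    rw [this, map_add]
  exact ⟨ν, ⟨hzero, fun A _ => hbounds A, hadd⟩, by rw [hext₁ Set.univ (alg_univ h𝔄₁), htot₁], hext₁, hext₂⟩
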